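/- arXiv:1703.02135 — 4 statements merged into one kernel-verified Lean document; each statement's English description precedes it below -/
import Mathlib

section
/- If V : ℝⁿ → [0,1] is a bounded Borel-measurable function and Q(·|x,u) is a stochastic kernel on ℝⁿ given by a continuous density y ↦ ψ_w(y − Ax − Bu) with ψ_w continuous and bounded, then the map (x, u) ↦ ∫ V(y) ψ_w(y − Ax − Bu) dy is continuous on ℝⁿ × ℝᵐ. -/
open MeasureTheory Matrix


section aux
variable {n : ℕ}

noncomputable def transCM (c : Fin n → ℝ) : C(Fin n → ℝ, Fin n → ℝ) :=
  ⟨fun y => y - c, by fun_prop⟩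

lemma transCM_mp (c : Fin n → ℝ) :
    MeasurePreserving (transCM c) (volume : Measure (Fin n → ℝ)) volume := by
  simpa [transCM, sub_eq_add_neg] using
    measurePreserving_add_right (volume : Measure (Fin n → ℝ)) (-c)

lemma transCM_continuous : Continuous (transCM (n := n)) := by
  apply ContinuousMap.continuous_of_continuous_uncurry
  exact continuous_snd.sub continuous_fst

lemma integrable_V_mul (V : (Fin n → ℝ) → ℝ) (hV_meas : Measurable V)
    (hV_bdd : ∀ y, V y ∈ Set.Icc (0 : ℝ) 1)
    (h : Lp ℝ 1 (volume : Measure (Fin n → ℝ))) :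
    Integrable (fun y => V y * h y) volume :=
  Integrable.bdd_mul (c := 1) (L1.integrable_coeFn h)
    hV_meas.aestronglyMeasurable
    (Filter.Eventually.of_forall fun y => by
      rw [Real.norm_eq_abs, abs_of_nonneg (hV_bdd y).1]; exact (hV_bdd y).2)

lemma pairing_lipschitz (V : (Fin n → ℝ) → ℝ) (hV_meas : Measurable V)
    (hV_bdd : ∀ y, V y ∈ Set.Icc (0 : ℝ) 1) :
    LipschitzWith 1 (fun h : Lp ℝ 1 (volume : Measure (Fin n → ℝ)) => ∫ y, V y * h y) := by
  apply LipschitzWith.of_dist_le_mul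
  intro h₁ h₂
  rw [NNReal.coe_one, one_mul, dist_eq_norm h₁ h₂, L1.norm_eq_integral_norm]
  have hi := integrable_V_mul V hV_meas hV_bdd
  have hsub : ((h₁ - h₂ : Lp ℝ 1 (volume : Measure (Fin n → ℝ))) : (Fin n → ℝ) → ℝ)
      =ᵐ[volume] fun y => h₁ y - h₂ y := Lp.coeFn_sub h₁ h₂
  calc dist (∫ y, V y * h₁ y) (∫ y, V y * h₂ y)
      = |∫ y, (V y * h₁ y - V y * h₂ y)| := by
        rw [Real.dist_eq, integral_sub (hi h₁) (hi h₂)]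
    _ ≤ ∫ y, |V y * h₁ y - V y * h₂ y| := by
        simpa [Real.norm_eq_abs] using
          norm_integral_le_integral_norm (μ := volume) (fun y => V y * h₁ y - V y * h₂ y)
    _ ≤ ∫ y, ‖(h₁ - h₂ : Lp ℝ 1 (volume : Measure (Fin n → ℝ))) y‖ := by
        refine integral_mono_ae ((hi h₁).sub (hi h₂)).abs
          (L1.integrable_coeFn _).norm ?_
        filter_upwards [hsub] with y hy
        rw [Real.norm_eq_abs, hy, ← mul_sub, abs_mul,
          abs_of_nonneg (hV_bdd y).1]
        exact mul_le_of_le_one_left (abs_nonneg _) (hV_bdd y).2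
end aux

/-- Continuity of `(x,u) ↦ ∫ V(y) ψ_w(y - Ax - Bu) dy` for bounded measurable
`V` with values in `[0,1]` and continuous bounded density `ψ_w`. -/
theorem integral_value_function_continuous
    {n m : ℕ}
    (A : Matrix (Fin n) (Fin n) ℝ) (B : Matrix (Fin n) (Fin m) ℝ)
    (ψ : (Fin n → ℝ) → ℝ)
    (hψ_cont : Continuous ψ)
    (hψ_bdd : ∃ C, ∀ z, ψ z ≤ C)
    (hψ_nonneg : ∀ z, 0 ≤ ψ z)
    (hψ_int : Integrable ψ volume)
    (hψ_one : ∫ z, ψ z = 1)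
    (V : (Fin n → ℝ) → ℝ)
    (hV_meas : Measurable V)
    (hV_bdd : ∀ y, V y ∈ Set.Icc (0 : ℝ) 1) :
    Continuous (fun p : (Fin n → ℝ) × (Fin m → ℝ) =>
      ∫ y, V y * ψ (y - A.mulVec p.1 - B.mulVec p.2)) := by
  have hF : Continuous (fun c : Fin n → ℝ => ∫ y, V y * ψ (y - c)) := by
    have hT : Continuous (fun c : Fin n → ℝ =>
        Lp.compMeasurePreserving (transCM c) (transCM_mp c) (hψ_int.toL1 ψ)) :=
      Continuous.compMeasurePreservingLp continuous_const transCM_continuous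
        (fun c => transCM_mp c) (by norm_num)
    have hcomp := (pairing_lipschitz V hV_meas hV_bdd).continuous.comp hT
    refine hcomp.congr fun c => ?_
    refine integral_congr_ae ?_
    have h1 : (Lp.compMeasurePreserving (transCM c) (transCM_mp c) (hψ_int.toL1 ψ) :
        (Fin n → ℝ) → ℝ) =ᵐ[volume] (hψ_int.toL1 ψ : (Fin n → ℝ) → ℝ) ∘ (transCM c) :=
      Lp.coeFn_compMeasurePreserving _ _
    have h2 : ((hψ_int.toL1 ψ : (Fin n → ℝ) → ℝ) ∘ (transCM c)) =ᵐ[volume] ψ ∘ (transCM c) :=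
      (transCM_mp c).quasiMeasurePreserving.ae_eq hψ_int.coeFn_toL1
    filter_upwards [h1, h2] with y hy1 hy2
    rw [hy1, hy2]
    rfl
  have hc : Continuous (fun p : (Fin n → ℝ) × (Fin m → ℝ) =>
      A.mulVec p.1 + B.mulVec p.2) :=
    (continuous_const.matrix_mulVec continuous_fst).add
      (continuous_const.matrix_mulVec continuous_snd)
  simpa [sub_sub, Function.comp_def] using hF.comp hc
end

section
/- Under the dynamic programming recursion V_N(x) = 1_𝒯(x) and V_k(x) = sup_{u ∈ 𝒰} 1_𝒮(x) ∫ V_{k+1}(y) ψ_w(y − Ax − Bu) dy for k = N−1, …, 0, with 𝒰 compact, ψ_w continuous and bounded, and 𝒮, 𝒯 Borel sets, every value function V_k is Borel-measurable and takes values in [0,1]. -/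
open MeasureTheory Matrix

section Aux

open Filter Topology

/-- Continuity of the "convolution" `c ↦ ∫ y, W y * ψ (y - c)` for `W` bounded measurable and
`ψ` integrable, via continuity of translation in `L¹`. -/
private lemma aux_conv_continuous {n : ℕ} {W ψ : (Fin n → ℝ) → ℝ}
    (hW : Measurable W) (hWb : ∀ x, ‖W x‖ ≤ 1) (hψ_int : Integrable ψ volume) :
    Continuous fun c : Fin n → ℝ => ∫ y, W y * ψ (y - c) := by
  classical
  set μ : Measure (Fin n → ℝ) := volume with hμ
  have hint : ∀ f : Lp ℝ 1 μ, Integrable (fun y => W y * f y) μ := fun f =>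
    (L1.integrable_coeFn f).bdd_mul hW.aestronglyMeasurable (ae_of_all _ hWb)
  -- the integration functional on L¹ is Lipschitz
  have hΦlip : LipschitzWith 1 (fun f : Lp ℝ 1 μ => ∫ y, W y * f y ∂μ) := by
    refine LipschitzWith.of_dist_le_mul fun f g => ?_
    rw [Real.dist_eq, NNReal.coe_one, one_mul, dist_eq_norm]
    have h1 : (∫ y, W y * f y ∂μ) - ∫ y, W y * g y ∂μ
        = ∫ y, W y * ((f : (Fin n → ℝ) → ℝ) y - g y) ∂μ := by
      rw [← integral_sub (hint f) (hint g)]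
      congr 1; ext y; ring
    rw [h1]
    have hsub : Integrable (fun y => W y * ((f : (Fin n → ℝ) → ℝ) y - g y)) μ := by
      have := (hint f).sub (hint g)
      simpa [mul_sub, Pi.sub_def] using this
    calc |∫ y, W y * ((f : (Fin n → ℝ) → ℝ) y - g y) ∂μ|
        ≤ ∫ y, ‖W y * ((f : (Fin n → ℝ) → ℝ) y - g y)‖ ∂μ := by
          rw [← Real.norm_eq_abs]
          exact norm_integral_le_integral_norm (μ := μ)
            (f := fun y => W y * ((f : (Fin n → ℝ) → ℝ) y - g y))
      _ ≤ ∫ y, ‖(f - g : Lp ℝ 1 μ) y‖ ∂μ := by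
          refine integral_mono_ae hsub.norm (L1.integrable_coeFn (f - g)).norm ?_
          filter_upwards [Lp.coeFn_sub f g] with y hy
          rw [hy]
          simp only [Pi.sub_apply, norm_mul]
          calc ‖W y‖ * ‖(f : (Fin n → ℝ) → ℝ) y - g y‖
              ≤ 1 * ‖(f : (Fin n → ℝ) → ℝ) y - g y‖ :=
                mul_le_mul_of_nonneg_right (hWb y) (norm_nonneg _)
            _ = ‖(f : (Fin n → ℝ) → ℝ) y - g y‖ := one_mul _
      _ = ‖f - g‖ := (L1.norm_eq_integral_norm _).symm
  -- the translation family
  let T : (Fin n → ℝ) → C(Fin n → ℝ, Fin n → ℝ) := fun c =>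
    ⟨fun y => y - c, by fun_prop⟩
  have hT : Continuous T :=
    ContinuousMap.continuous_of_continuous_uncurry _ (continuous_snd.sub continuous_fst)
  have hTm : ∀ c : Fin n → ℝ, MeasurePreserving (T c) μ μ := fun c =>
    measurePreserving_sub_right μ c
  let ψ₁ : Lp ℝ 1 μ := hψ_int.toL1 ψ
  have hK : Continuous fun c => Lp.compMeasurePreserving (T c) (hTm c) ψ₁ :=
    Continuous.compMeasurePreservingLp continuous_const hT hTm (by norm_num)
  have hcomp := hΦlip.continuous.comp hK
  refine hcomp.congr fun c => ?_
  refine integral_congr_ae ?_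
  have h₁ : (Lp.compMeasurePreserving (T c) (hTm c) ψ₁ : (Fin n → ℝ) → ℝ)
      =ᵐ[μ] (ψ₁ : (Fin n → ℝ) → ℝ) ∘ (T c) := Lp.coeFn_compMeasurePreserving ψ₁ (hTm c)
  have h₂ : ((ψ₁ : (Fin n → ℝ) → ℝ) ∘ (T c)) =ᵐ[μ] (ψ ∘ (T c)) :=
    (hTm c).quasiMeasurePreserving.ae_eq_comp (hψ_int.coeFn_toL1)
  filter_upwards [h₁, h₂] with y hy₁ hy₂
  rw [hy₁, hy₂]
  rfl

/-- The measurability and boundedness step of the dynamic programming recursion. -/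
private lemma aux_step {n m : ℕ}
    (A : Matrix (Fin n) (Fin n) ℝ) (B : Matrix (Fin n) (Fin m) ℝ)
    (𝒰 : Set (Fin m → ℝ)) (h𝒰ne : 𝒰.Nonempty)
    (ψ : (Fin n → ℝ) → ℝ)
    (hψ_nonneg : ∀ z, 0 ≤ ψ z) (hψ_int : Integrable ψ volume)
    (hψ_one : ∫ z, ψ z = 1)
    (𝒮 : Set (Fin n → ℝ)) (h𝒮 : MeasurableSet 𝒮)
    (W : (Fin n → ℝ) → ℝ) (hW : Measurable W) (hWb : ∀ x, W x ∈ Set.Icc (0 : ℝ) 1) :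
    Measurable (fun x => ⨆ u ∈ 𝒰, 𝒮.indicator (fun _ => (1 : ℝ)) x *
        ∫ y, W y * ψ (y - A.mulVec x - B.mulVec u)) ∧
      ∀ x, (⨆ u ∈ 𝒰, 𝒮.indicator (fun _ => (1 : ℝ)) x *
        ∫ y, W y * ψ (y - A.mulVec x - B.mulVec u)) ∈ Set.Icc (0 : ℝ) 1 := by
  classical
  have hWnorm : ∀ x, ‖W x‖ ≤ 1 := fun x => by
    rw [Real.norm_eq_abs, abs_le]
    exact ⟨by linarith [(hWb x).1], (hWb x).2⟩
  -- the convolution function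
  set h : (Fin n → ℝ) → ℝ := fun c => ∫ y, W y * ψ (y - c) with hdef
  have hcont : Continuous h := aux_conv_continuous hW hWnorm hψ_int
  have hψc_int : ∀ c, Integrable (fun y => ψ (y - c)) volume := fun c =>
    hψ_int.comp_sub_right c
  have hint : ∀ c, Integrable (fun y => W y * ψ (y - c)) volume := fun c =>
    (hψc_int c).bdd_mul hW.aestronglyMeasurable (ae_of_all _ hWnorm)
  have h0 : ∀ c, 0 ≤ h c := fun c =>
    integral_nonneg fun y => mul_nonneg (hWb y).1 (hψ_nonneg _)
  have h1 : ∀ c, h c ≤ 1 := by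
    intro c
    calc h c ≤ ∫ y, ψ (y - c) :=
          integral_mono (hint c) (hψc_int c) fun y =>
            mul_le_of_le_one_left (hψ_nonneg _) (hWb y).2
      _ = ∫ z, ψ z := integral_sub_right_eq_self ψ c
      _ = 1 := hψ_one
  -- continuity of the affine maps
  have hAc : Continuous fun x : Fin n → ℝ => A.mulVec x := by
    have := A.mulVecLin.continuous_of_finiteDimensional
    exact this
  have hBc : Continuous fun u : Fin m → ℝ => B.mulVec u := by
    have := B.mulVecLin.continuous_of_finiteDimensional
    exact this
  set g : (Fin n → ℝ) → (Fin m → ℝ) → ℝ := fun x u => h (A.mulVec x + B.mulVec u) with gdef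
  have hgx_cont : ∀ x, Continuous fun u => g x u := fun x =>
    hcont.comp (continuous_const.add hBc)
  have hgu_cont : ∀ u, Continuous fun x => g x u := fun u =>
    hcont.comp (hAc.add continuous_const)
  -- countable dense subset of 𝒰
  haveI : Nonempty ↥𝒰 := h𝒰ne.to_subtype
  obtain ⟨D, Dct, Ddense⟩ := TopologicalSpace.exists_countable_dense ↥𝒰
  haveI := Dct.to_subtype
  set F : (Fin n → ℝ) → ℝ := fun x => ⨆ d : D, g x ((d : ↥𝒰) : Fin m → ℝ) with Fdef
  have Fmeas : Measurable F :=
    Measurable.iSup fun d => (hgu_cont _).measurable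
  have F0 : ∀ x, 0 ≤ F x := fun x => Real.iSup_nonneg fun d => h0 _
  have F1 : ∀ x, F x ≤ 1 := fun x => Real.iSup_le (fun d => h1 _) zero_le_one
  -- sup over 𝒰 equals sup over the countable dense set
  have key : ∀ x, (⨆ u ∈ 𝒰, g x u) = F x := by
    intro x
    refine le_antisymm ?_ ?_
    · refine Real.iSup_le (fun u => Real.iSup_le (fun hu => ?_) (F0 x)) (F0 x)
      have hcl : (⟨u, hu⟩ : ↥𝒰) ∈ closure D := Ddense _
      rw [mem_closure_iff_seq_limit] at hcl
      obtain ⟨s, hsD, hslim⟩ := hcl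
      have bd : BddAbove (Set.range fun d : D => g x ((d : ↥𝒰) : Fin m → ℝ)) := by
        refine ⟨1, ?_⟩
        rintro _ ⟨d, rfl⟩
        exact h1 _
      have hle : ∀ i, g x ((s i : ↥𝒰) : Fin m → ℝ) ≤ F x := fun i =>
        le_ciSup_of_le bd ⟨s i, hsD i⟩ le_rfl
      have hlim : Tendsto (fun i => g x ((s i : ↥𝒰) : Fin m → ℝ)) atTop (𝓝 (g x u)) := by
        have h₁ : Tendsto (fun i => ((s i : ↥𝒰) : Fin m → ℝ)) atTop
            (𝓝 ((⟨u, hu⟩ : ↥𝒰) : Fin m → ℝ)) :=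
          (continuous_subtype_val.tendsto _).comp hslim
        exact ((hgx_cont x).tendsto u).comp h₁
      exact le_of_tendsto hlim (Eventually.of_forall hle)
    · refine Real.iSup_le (fun d => ?_)
        (Real.iSup_nonneg fun u => Real.iSup_nonneg fun hu => h0 _)
      have hb : BddAbove (Set.range fun u => ⨆ _ : u ∈ 𝒰, g x u) := by
        refine ⟨1, ?_⟩
        rintro _ ⟨u, rfl⟩
        exact Real.iSup_le (fun _ => h1 _) zero_le_one
      refine le_ciSup_of_le hb ((d : ↥𝒰) : Fin m → ℝ) ?_
      rw [ciSup_pos (d : ↥𝒰).2]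
  -- rewrite the objective
  have fullkey : ∀ x, (⨆ u ∈ 𝒰, 𝒮.indicator (fun _ => (1 : ℝ)) x *
      ∫ y, W y * ψ (y - A.mulVec x - B.mulVec u))
      = 𝒮.indicator (fun _ => (1 : ℝ)) x * F x := by
    intro x
    have hsubsub : ∀ u : Fin m → ℝ,
        (∫ y, W y * ψ (y - A.mulVec x - B.mulVec u)) = g x u := by
      intro u
      simp only [gdef, hdef, sub_sub]
    by_cases hx : x ∈ 𝒮
    · simp only [Set.indicator_of_mem hx, one_mul, hsubsub]
      exact key x
    · simp only [Set.indicator_of_notMem hx, zero_mul]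
      simp [Real.iSup_const_zero]
  constructor
  · have : (fun x => ⨆ u ∈ 𝒰, 𝒮.indicator (fun _ => (1 : ℝ)) x *
        ∫ y, W y * ψ (y - A.mulVec x - B.mulVec u))
        = fun x => 𝒮.indicator (fun _ => (1 : ℝ)) x * F x := funext fullkey
    rw [this]
    exact (measurable_const.indicator h𝒮).mul Fmeas
  · intro x
    rw [fullkey x]
    by_cases hx : x ∈ 𝒮
    · simp only [Set.indicator_of_mem hx, one_mul]
      exact ⟨F0 x, F1 x⟩
    · simp only [Set.indicator_of_notMem hx, zero_mul]
      exact ⟨le_rfl, zero_le_one⟩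

end Aux

/-- Borel-measurability and `[0,1]`-boundedness of the value functions of the
terminal hitting time reach-avoid dynamic programming recursion. -/
theorem reach_avoid_value_functions_measurable
    {n m : ℕ} (N : ℕ)
    (A : Matrix (Fin n) (Fin n) ℝ) (B : Matrix (Fin n) (Fin m) ℝ)
    (𝒰 : Set (Fin m → ℝ)) (h𝒰c : IsCompact 𝒰) (h𝒰ne : 𝒰.Nonempty)
    (ψ : (Fin n → ℝ) → ℝ)
    (hψ_cont : Continuous ψ) (hψ_bdd : ∃ C, ∀ z, ψ z ≤ C)
    (hψ_nonneg : ∀ z, 0 ≤ ψ z) (hψ_int : Integrable ψ volume)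
    (hψ_one : ∫ z, ψ z = 1)
    (𝒮 𝒯 : Set (Fin n → ℝ)) (h𝒮 : MeasurableSet 𝒮) (h𝒯 : MeasurableSet 𝒯)
    (V : ℕ → (Fin n → ℝ) → ℝ)
    (hVN : ∀ x, V N x = 𝒯.indicator (fun _ => (1 : ℝ)) x)
    (hVk : ∀ k < N, ∀ x, V k x =
      ⨆ u ∈ 𝒰, 𝒮.indicator (fun _ => (1 : ℝ)) x *
        ∫ y, V (k + 1) y * ψ (y - A.mulVec x - B.mulVec u)) :
    ∀ k ≤ N, Measurable (V k) ∧ ∀ x, V k x ∈ Set.Icc (0 : ℝ) 1 := by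
  have main : ∀ d k, k + d = N → Measurable (V k) ∧ ∀ x, V k x ∈ Set.Icc (0 : ℝ) 1 := by
    intro d
    induction d with
    | zero =>
      intro k hk
      have hkN : k = N := by omega
      subst hkN
      constructor
      · have hfun : V k = 𝒯.indicator fun _ => (1 : ℝ) := funext hVN
        rw [hfun]
        exact measurable_const.indicator h𝒯
      · intro x
        rw [hVN x]
        by_cases hx : x ∈ 𝒯 <;>
          simp [Set.indicator_apply, hx, Set.mem_Icc, zero_le_one]
    | succ d ih =>
      intro k hk
      have hIH := ih (k + 1) (by omega)
      have hkN : k < N := by omega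
      obtain ⟨smeas, sbound⟩ := aux_step A B 𝒰 h𝒰ne ψ hψ_nonneg hψ_int hψ_one 𝒮 h𝒮
        (V (k + 1)) hIH.1 hIH.2
      have hfun : V k = fun x => ⨆ u ∈ 𝒰, 𝒮.indicator (fun _ => (1 : ℝ)) x *
          ∫ y, V (k + 1) y * ψ (y - A.mulVec x - B.mulVec u) := funext (hVk k hkN)
      constructor
      · rw [hfun]; exact smeas
      · intro x; rw [hVk k hkN x]; exact sbound x
  intro k hk
  exact main (N - k) k (by omega)
end

section
/- The supremum over open-loop control sequences of the open-loop reach-avoid probability is at most the optimal closed-loop (Markov policy) reach-avoid probability: sup_{U ∈ 𝒰^N} W_0(x_0, U) ≤ V_0(x_0) for every initial state x_0. -/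
open MeasureTheory Matrix Filter Topology

lemma cont_translate_integral' {n : ℕ} (ψ : (Fin n → ℝ) → ℝ)
    (hψ_int : Integrable ψ volume)
    (g : (Fin n → ℝ) → ℝ) (hg : Measurable g) (hg1 : ∀ y, ‖g y‖ ≤ 1) :
    Continuous fun c : Fin n → ℝ => ∫ y, g y * ψ (y - c) := by
  haveI : Fact ((1:ENNReal) ≤ 1) := ⟨le_rfl⟩
  let Tm : C((Fin n → ℝ) × (Fin n → ℝ), Fin n → ℝ) :=
    ⟨fun p => p.2 - p.1, continuous_snd.sub continuous_fst⟩
  let T : (Fin n → ℝ) → C(Fin n → ℝ, Fin n → ℝ) := fun c => Tm.curry c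
  have hT : Continuous T := Tm.curry.continuous
  have mp : ∀ c : Fin n → ℝ, MeasurePreserving (T c) volume volume := fun c =>
    measurePreserving_sub_right volume c
  let ψL : Lp ℝ 1 (volume : Measure (Fin n → ℝ)) := hψ_int.toL1 ψ
  let Φ : (Fin n → ℝ) → Lp ℝ 1 (volume : Measure (Fin n → ℝ)) := fun c =>
    Lp.compMeasurePreserving (T c) (mp c) ψL
  have hΦ : Continuous Φ := by
    rw [continuous_iff_continuousAt]
    intro c₀
    exact Filter.Tendsto.compMeasurePreservingLp tendsto_const_nhds (hT.tendsto c₀)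
      mp (mp c₀) (by norm_num)
  let G : Lp ℝ 1 (volume : Measure (Fin n → ℝ)) → ℝ := fun h => ∫ y, g y * h y
  have hint : ∀ h : Lp ℝ 1 (volume : Measure (Fin n → ℝ)),
      Integrable (fun y => g y * h y) volume :=
    fun h => (L1.integrable_coeFn h).bdd_mul hg.aestronglyMeasurable (Eventually.of_forall hg1)
  have hLip : LipschitzWith 1 G := by
    apply LipschitzWith.of_dist_le_mul
    intro h₁ h₂
    rw [NNReal.coe_one, one_mul, dist_eq_norm (G h₁) (G h₂), dist_eq_norm h₁ h₂, L1.norm_eq_integral_norm]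
    have h12 : (fun y => (h₁ - h₂ : Lp ℝ 1 (volume : Measure (Fin n → ℝ))) y)
        =ᵐ[volume] fun y => h₁ y - h₂ y := Lp.coeFn_sub h₁ h₂
    have e1 : G h₁ - G h₂ = ∫ y, g y * ((h₁ - h₂ : Lp ℝ 1 (volume : Measure (Fin n → ℝ))) y) := by
      rw [← integral_sub (hint h₁) (hint h₂)]
      refine (integral_congr_ae ?_).symm
      filter_upwards [h12] with y hy
      rw [hy]; ring
    rw [e1]
    calc ‖∫ y, g y * ((h₁ - h₂ : Lp ℝ 1 (volume : Measure (Fin n → ℝ))) y)‖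
        ≤ ∫ y, ‖g y * ((h₁ - h₂ : Lp ℝ 1 (volume : Measure (Fin n → ℝ))) y)‖ :=
          norm_integral_le_integral_norm _
      _ ≤ ∫ y, ‖(h₁ - h₂ : Lp ℝ 1 (volume : Measure (Fin n → ℝ))) y‖ := by
          refine integral_mono_of_nonneg (Eventually.of_forall fun y => norm_nonneg _)
            (L1.integrable_coeFn _).norm (Eventually.of_forall fun y => ?_)
          simp only [norm_mul]
          exact mul_le_of_le_one_left (norm_nonneg _) (hg1 y)
  have hkey : (fun c : Fin n → ℝ => ∫ y, g y * ψ (y - c)) = G ∘ Φ := by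
    funext c
    refine (integral_congr_ae ?_).symm
    have h1 : (Φ c : (Fin n → ℝ) → ℝ) =ᵐ[volume] ψL ∘ (T c) :=
      Lp.coeFn_compMeasurePreserving ψL (mp c)
    have h2 : (ψL : (Fin n → ℝ) → ℝ) =ᵐ[volume] ψ := hψ_int.coeFn_toL1
    have h3 : (ψL ∘ (T c) : (Fin n → ℝ) → ℝ) =ᵐ[volume] fun y => ψ (y - c) :=
      (mp c).quasiMeasurePreserving.ae_eq_comp h2
    filter_upwards [h1.trans h3] with y hy
    simp only [G, hy]
  rw [hkey]
  exact hLip.continuous.comp hΦ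


/-- The supremum over open-loop control sequences of the open-loop reach-avoid
probability is at most the optimal closed-loop (Markov policy) reach-avoid
probability. -/
theorem sup_open_loop_le_closed_loop
    {n m : ℕ} (N : ℕ)
    (A : Matrix (Fin n) (Fin n) ℝ) (B : Matrix (Fin n) (Fin m) ℝ)
    (𝒰 : Set (Fin m → ℝ)) (h𝒰c : IsCompact 𝒰) (h𝒰ne : 𝒰.Nonempty)
    (ψ : (Fin n → ℝ) → ℝ)
    (hψ_cont : Continuous ψ) (hψ_bdd : ∃ C, ∀ z, ψ z ≤ C)
    (hψ_nonneg : ∀ z, 0 ≤ ψ z) (hψ_int : Integrable ψ volume)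
    (hψ_one : ∫ z, ψ z = 1)
    (𝒮 𝒯 : Set (Fin n → ℝ)) (h𝒮 : MeasurableSet 𝒮) (h𝒯 : MeasurableSet 𝒯)
    (V : ℕ → (Fin n → ℝ) → ℝ)
    (hVN : ∀ x, V N x = 𝒯.indicator (fun _ => (1 : ℝ)) x)
    (hVk : ∀ k < N, ∀ x, V k x =
      ⨆ u ∈ 𝒰, 𝒮.indicator (fun _ => (1 : ℝ)) x *
        ∫ y, V (k + 1) y * ψ (y - A.mulVec x - B.mulVec u))
    (W : ℕ → (Fin n → ℝ) → (ℕ → Fin m → ℝ) → ℝ)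
    (hWN : ∀ x U, W N x U = 𝒯.indicator (fun _ => (1 : ℝ)) x)
    (hWk : ∀ k < N, ∀ x U, W k x U =
      𝒮.indicator (fun _ => (1 : ℝ)) x *
        ∫ y, W (k + 1) y U * ψ (y - A.mulVec x - B.mulVec (U k))) :
    ∀ x₀ : Fin n → ℝ,
      ⨆ U ∈ {U : ℕ → Fin m → ℝ | ∀ j, U j ∈ 𝒰}, W 0 x₀ U ≤ V 0 x₀ := by
  intro x₀
  -- continuity of the linear maps
  have hA : Continuous fun x : Fin n → ℝ => A.mulVec x := by
    have h := LinearMap.continuous_of_finiteDimensional (A.mulVecLin)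
    simpa [Matrix.coe_mulVecLin] using h
  have hB : Continuous fun u : Fin m → ℝ => B.mulVec u := by
    have h := LinearMap.continuous_of_finiteDimensional (B.mulVecLin)
    simpa [Matrix.coe_mulVecLin] using h
  -- indicator bounds
  have hind : ∀ (S : Set (Fin n → ℝ)) (x : Fin n → ℝ),
      0 ≤ S.indicator (fun _ => (1:ℝ)) x ∧ S.indicator (fun _ => (1:ℝ)) x ≤ 1 := by
    intro S x
    by_cases hx : x ∈ S <;> simp [Set.indicator, hx]
  -- countable dense subset of 𝒰
  obtain ⟨s, hs_count, hs_dense⟩ := TopologicalSpace.exists_countable_dense (↥𝒰)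
  set D : Set (Fin m → ℝ) := Subtype.val '' s with hD
  have hDsub : D ⊆ 𝒰 := by rintro _ ⟨⟨u, hu⟩, _, rfl⟩; exact hu
  have hDcount : D.Countable := hs_count.image _
  haveI : Countable ↥D := hDcount.to_subtype
  have hDdense : ∀ u ∈ 𝒰, u ∈ closure D := by
    intro u hu
    have h1 : (⟨u, hu⟩ : ↥𝒰) ∈ closure s := hs_dense _
    exact image_closure_subset_closure_image continuous_subtype_val ⟨⟨u, hu⟩, h1, rfl⟩
  have main : ∀ d : ℕ, d ≤ N →
      Measurable (V (N - d)) ∧ (∀ x, 0 ≤ V (N - d) x) ∧ (∀ x, V (N - d) x ≤ 1) ∧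
      (∀ x U, 0 ≤ W (N - d) x U) ∧
      (∀ x U, (∀ j, U j ∈ 𝒰) → W (N - d) x U ≤ V (N - d) x) := by
    intro d
    induction d with
    | zero =>
      intro _
      simp only [Nat.sub_zero]
      have hVind : V N = 𝒯.indicator (fun _ => (1:ℝ)) := funext hVN
      refine ⟨hVind ▸ measurable_const.indicator h𝒯,
        fun x => (hVN x) ▸ (hind 𝒯 x).1, fun x => (hVN x) ▸ (hind 𝒯 x).2,
        fun x U => (hWN x U) ▸ (hind 𝒯 x).1,
        fun x U _ => by rw [hWN x U, hVN x]⟩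
    | succ d ih =>
      intro hd1
      obtain ⟨ihm, ih0, ih1, ihW0, ihWV⟩ := ih (Nat.le_of_succ_le hd1)
      set k := N - (d + 1) with hk
      have hkN : k < N := by omega
      have hsucc : N - d = k + 1 := by omega
      rw [hsucc] at ihm ih0 ih1 ihW0 ihWV
      -- the convolution-type function
      set F : (Fin n → ℝ) → ℝ := fun c => ∫ y, V (k + 1) y * ψ (y - c) with hF_def
      have hg1 : ∀ y, ‖V (k + 1) y‖ ≤ 1 := fun y => by
        rw [Real.norm_eq_abs, abs_of_nonneg (ih0 y)]; exact ih1 y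
      have hFcont : Continuous F := cont_translate_integral' ψ hψ_int (V (k + 1)) ihm hg1
      have hψc : ∀ c : Fin n → ℝ, Integrable (fun y => ψ (y - c)) volume := fun c =>
        (measurePreserving_sub_right volume c).integrable_comp
          hψ_int.aestronglyMeasurable |>.mpr hψ_int
      have hItg : ∀ c : Fin n → ℝ, Integrable (fun y => V (k + 1) y * ψ (y - c)) volume := by
        intro c
        refine (hψc c).mono'
          ((ihm.mul ((hψ_cont.comp (continuous_id.sub continuous_const)).measurable)).aestronglyMeasurable)
          (Eventually.of_forall fun y => ?_)
        rw [norm_mul, Real.norm_of_nonneg (hψ_nonneg _)]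
        exact mul_le_of_le_one_left (hψ_nonneg _) (hg1 y)
      have hF0 : ∀ c, 0 ≤ F c := fun c =>
        integral_nonneg fun y => mul_nonneg (ih0 y) (hψ_nonneg _)
      have hF1 : ∀ c, F c ≤ 1 := by
        intro c
        have h1 : F c ≤ ∫ y, ψ (y - c) := by
          refine integral_mono_of_nonneg
            (Eventually.of_forall fun y => mul_nonneg (ih0 y) (hψ_nonneg _)) (hψc c)
            (Eventually.of_forall fun y => ?_)
          exact mul_le_of_le_one_left (hψ_nonneg _) (ih1 y)
        calc F c ≤ ∫ y, ψ (y - c) := h1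
          _ = ∫ y, ψ y := integral_sub_right_eq_self ψ c
          _ = 1 := hψ_one
      -- rewrite the recursion
      have hVk' : ∀ x, V k x = ⨆ u, ⨆ _ : u ∈ 𝒰,
          𝒮.indicator (fun _ => (1:ℝ)) x * F (A.mulVec x + B.mulVec u) := by
        intro x
        rw [hVk k hkN x]
        simp only [sub_sub, hF_def]
      have ht0 : ∀ x u, 0 ≤ 𝒮.indicator (fun _ => (1:ℝ)) x * F (A.mulVec x + B.mulVec u) :=
        fun x u => mul_nonneg (hind 𝒮 x).1 (hF0 _)
      have ht1 : ∀ x u, 𝒮.indicator (fun _ => (1:ℝ)) x * F (A.mulVec x + B.mulVec u) ≤ 1 :=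
        fun x u => mul_le_one₀ (hind 𝒮 x).2 (hF0 _) (hF1 _)
      have hbddU : ∀ x, BddAbove (Set.range fun u => ⨆ _ : u ∈ 𝒰,
          𝒮.indicator (fun _ => (1:ℝ)) x * F (A.mulVec x + B.mulVec u)) := by
        intro x
        refine ⟨1, ?_⟩
        rintro _ ⟨u, rfl⟩
        exact Real.iSup_le (fun _ => ht1 x u) zero_le_one
      have hV0 : ∀ x, 0 ≤ V k x := by
        intro x
        rw [hVk' x]
        exact Real.iSup_nonneg fun u => Real.iSup_nonneg fun _ => ht0 x u
      have hV1 : ∀ x, V k x ≤ 1 := by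
        intro x
        rw [hVk' x]
        exact Real.iSup_le (fun u => Real.iSup_le (fun _ => ht1 x u) zero_le_one) zero_le_one
      -- V k as countable sup
      have hbddD : ∀ x, BddAbove (Set.range fun dd : ↥D =>
          𝒮.indicator (fun _ => (1:ℝ)) x * F (A.mulVec x + B.mulVec ↑dd)) := by
        intro x
        refine ⟨1, ?_⟩
        rintro _ ⟨dd, rfl⟩
        exact ht1 x dd
      have hDx : ∀ x, V k x = ⨆ dd : ↥D,
          𝒮.indicator (fun _ => (1:ℝ)) x * F (A.mulVec x + B.mulVec ↑dd) := by
        intro x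
        refine le_antisymm ?_ ?_
        · rw [hVk' x]
          refine Real.iSup_le (fun u => Real.iSup_le (fun hu => ?_)
            (Real.iSup_nonneg fun dd => ht0 x dd)) (Real.iSup_nonneg fun dd => ht0 x dd)
          rcases mem_closure_iff_seq_limit.mp (hDdense u hu) with ⟨seq, hseqD, hseqlim⟩
          have hcont_t : Continuous fun u : Fin m → ℝ =>
              𝒮.indicator (fun _ => (1:ℝ)) x * F (A.mulVec x + B.mulVec u) :=
            continuous_const.mul (hFcont.comp (continuous_const.add hB))
          refine le_of_tendsto ((hcont_t.tendsto u).comp hseqlim)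
            (Eventually.of_forall fun i => ?_)
          exact le_ciSup (hbddD x) ⟨seq i, hseqD i⟩
        · refine Real.iSup_le (fun dd => ?_) (hV0 x)
          rw [hVk' x]
          exact le_ciSup_of_le (hbddU x) dd.1 (by rw [ciSup_pos (hDsub dd.2)])
      have hVmeas : Measurable (V k) := by
        have hVkfun : V k = fun x => ⨆ dd : ↥D,
            𝒮.indicator (fun _ => (1:ℝ)) x * F (A.mulVec x + B.mulVec ↑dd) := funext hDx
        rw [hVkfun]
        exact Measurable.iSup fun dd =>
          (measurable_const.indicator h𝒮).mul
            ((hFcont.comp (hA.add continuous_const)).measurable)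
      have hW0 : ∀ x U, 0 ≤ W k x U := by
        intro x U
        rw [hWk k hkN x U]
        exact mul_nonneg (hind 𝒮 x).1
          (integral_nonneg fun y => mul_nonneg (ihW0 y U) (hψ_nonneg _))
      refine ⟨hVmeas, hV0, hV1, hW0, ?_⟩
      intro x U hU
      rw [hWk k hkN x U]
      simp only [sub_sub]
      have h1 : (∫ y, W (k + 1) y U * ψ (y - (A.mulVec x + B.mulVec (U k))))
          ≤ F (A.mulVec x + B.mulVec (U k)) := by
        refine integral_mono_of_nonneg
          (Eventually.of_forall fun y => mul_nonneg (ihW0 y U) (hψ_nonneg _)) (hItg _)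
          (Eventually.of_forall fun y => ?_)
        exact mul_le_mul_of_nonneg_right (ihWV y U hU) (hψ_nonneg _)
      calc 𝒮.indicator (fun _ => (1:ℝ)) x *
            ∫ y, W (k + 1) y U * ψ (y - (A.mulVec x + B.mulVec (U k)))
          ≤ 𝒮.indicator (fun _ => (1:ℝ)) x * F (A.mulVec x + B.mulVec (U k)) :=
            mul_le_mul_of_nonneg_left h1 (hind 𝒮 x).1
        _ ≤ V k x := by
            rw [hVk' x]
            exact le_ciSup_of_le (hbddU x) (U k) (by rw [ciSup_pos (hU k)])
  obtain ⟨_, h0, _, _, hWV⟩ := main N le_rfl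
  rw [Nat.sub_self] at h0 hWV
  exact Real.iSup_le (fun U => Real.iSup_le (fun hU => hWV x₀ U hU) (h0 x₀)) (h0 x₀)
end

section
/- If ψ : ℝ^p × ℝ^q → ℝ≥0 is log-concave jointly in (x, U), and K ⊆ ℝ^p is a convex set, then the function U ↦ ∫_K ψ(x, U) dx is log-concave on ℝ^q (marginal integration over a convex set preserves log-concavity, by the Prékopa–Leindler inequality). -/
open MeasureTheory Set
open scoped ENNReal Pointwise NNReal

lemma bm_compact {K L : Set ℝ} (hK : IsCompact K) (hL : IsCompact L)
    (hK0 : K.Nonempty) (hL0 : L.Nonempty) :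
    volume K + volume L ≤ volume (K + L) := by
  set a := sSup K with ha
  set b := sInf L with hb
  have haK : a ∈ K := hK.sSup_mem hK0
  have hbL : b ∈ L := hL.sInf_mem hL0
  have hSsub : b +ᵥ K ⊆ (K + L) ∩ Iic (a + b) := by
    rintro _ ⟨x, hx, rfl⟩
    refine ⟨?_, ?_⟩
    · show b + x ∈ K + L
      have := add_mem_add hx hbL
      rwa [add_comm x b] at this
    · show b + x ∈ Iic (a + b)
      simpa [add_comm] using add_le_add_right (le_csSup hK.bddAbove hx) b
  have hTsub : a +ᵥ (L \ {b}) ⊆ (K + L) ∩ Ioi (a + b) := by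
    rintro _ ⟨y, ⟨hy, hyb⟩, rfl⟩
    refine ⟨add_mem_add haK hy, ?_⟩
    have : b < y := lt_of_le_of_ne (csInf_le hL.bddBelow hy) (by simpa [eq_comm] using hyb)
    simpa using this
  have hdisj : Disjoint (b +ᵥ K) (a +ᵥ (L \ {b})) := by
    refine Disjoint.mono (hSsub.trans inter_subset_right) (hTsub.trans inter_subset_right) ?_
    exact Iic_disjoint_Ioi le_rfl
  have hTm : MeasurableSet (a +ᵥ (L \ {b})) :=
    (hL.measurableSet.diff (measurableSet_singleton b)).const_vadd a
  calc volume K + volume L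
      = volume (b +ᵥ K) + volume (a +ᵥ (L \ {b})) := by
        rw [measure_vadd, measure_vadd, measure_diff_null (measure_singleton b)]
    _ = volume ((b +ᵥ K) ∪ (a +ᵥ (L \ {b}))) := (measure_union hdisj hTm).symm
    _ ≤ volume (K + L) := measure_mono (union_subset
        (hSsub.trans inter_subset_left) (hTsub.trans inter_subset_left))

lemma bm_oneDim {A B : Set ℝ} (hA : MeasurableSet A) (hB : MeasurableSet B)
    (hA0 : A.Nonempty) (hB0 : B.Nonempty) :
    volume A + volume B ≤ volume (A + B) := by
  obtain ⟨a0, ha0⟩ := hA0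
  obtain ⟨b0, hb0⟩ := hB0
  by_cases hAfin : volume A = ∞
  · have : volume (A + B) = ∞ := by
      refine top_le_iff.mp ?_
      calc (⊤:ℝ≥0∞) = volume (b0 +ᵥ A) := by rw [measure_vadd, hAfin]
        _ ≤ volume (A + B) := by
            refine measure_mono ?_
            rintro _ ⟨x, hx, rfl⟩
            show b0 + x ∈ A + B
            have := add_mem_add hx hb0
            rwa [add_comm x b0] at this
    simp [this]
  by_cases hBfin : volume B = ∞
  · have : volume (A + B) = ∞ := by
      refine top_le_iff.mp ?_
      calc (⊤:ℝ≥0∞) = volume (a0 +ᵥ B) := by rw [measure_vadd, hBfin]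
        _ ≤ volume (A + B) := by
            refine measure_mono ?_
            rintro _ ⟨y, hy, rfl⟩
            exact add_mem_add ha0 hy
    simp [this]
  refine ENNReal.le_of_forall_pos_le_add fun ε hε _ => ?_
  have hco : ((ε/2 : ℝ≥0) : ℝ≥0∞) = (ε : ℝ≥0∞)/2 := by
    rw [ENNReal.coe_div two_ne_zero]; norm_num
  obtain ⟨K, hKA, hKc, hKv⟩ := hA.exists_isCompact_lt_add (μ := volume) hAfin
    (ε := (ε/2 : ℝ≥0)) (by positivity)
  obtain ⟨L, hLB, hLc, hLv⟩ := hB.exists_isCompact_lt_add (μ := volume) hBfin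
    (ε := (ε/2 : ℝ≥0)) (by positivity)
  have hK'c : IsCompact (K ∪ {a0}) := hKc.union isCompact_singleton
  have hL'c : IsCompact (L ∪ {b0}) := hLc.union isCompact_singleton
  have hK'A : K ∪ {a0} ⊆ A := union_subset hKA (by simpa using ha0)
  have hL'B : L ∪ {b0} ⊆ B := union_subset hLB (by simpa using hb0)
  rw [hco] at hKv hLv
  have h1 : volume A ≤ volume (K ∪ {a0}) + (ε : ℝ≥0∞)/2 := by
    exact hKv.le.trans (add_le_add_left (measure_mono subset_union_left) _)
  have h2 : volume B ≤ volume (L ∪ {b0}) + (ε : ℝ≥0∞)/2 := by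
    exact hLv.le.trans (add_le_add_left (measure_mono subset_union_left) _)
  calc volume A + volume B
      ≤ (volume (K ∪ {a0}) + (ε : ℝ≥0∞)/2) + (volume (L ∪ {b0}) + (ε : ℝ≥0∞)/2) :=
        add_le_add h1 h2
    _ = (volume (K ∪ {a0}) + volume (L ∪ {b0})) + ((ε : ℝ≥0∞)/2 + (ε : ℝ≥0∞)/2) := by
        ring
    _ = (volume (K ∪ {a0}) + volume (L ∪ {b0})) + ε := by
        rw [ENNReal.add_halves]
    _ ≤ volume ((K ∪ {a0}) + (L ∪ {b0})) + ε :=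
        add_le_add_left (bm_compact hK'c hL'c ⟨a0, by simp⟩ ⟨b0, by simp⟩) _
    _ ≤ volume (A + B) + ε := add_le_add_left (measure_mono (add_subset_add hK'A hL'B)) _
lemma ennreal_rpow_iSup {ι : Sort*} (u : ι → ℝ≥0∞) {t : ℝ} (ht : 0 < t) :
    (⨆ i, u i) ^ t = ⨆ i, u i ^ t := by
  apply le_antisymm
  · have key : (⨆ i, u i) ≤ (⨆ i, u i ^ t) ^ (1/t) := by
      refine iSup_le fun i => ?_
      have : u i = (u i ^ t) ^ (1/t) := by
        rw [← ENNReal.rpow_mul, mul_one_div, div_self ht.ne', ENNReal.rpow_one]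
      rw [this]
      exact ENNReal.rpow_le_rpow (le_iSup (fun i => u i ^ t) i) (by positivity)
    calc (⨆ i, u i) ^ t ≤ ((⨆ i, u i ^ t) ^ (1/t)) ^ t := ENNReal.rpow_le_rpow key ht.le
      _ = ⨆ i, u i ^ t := by
          rw [← ENNReal.rpow_mul, one_div, inv_mul_cancel₀ ht.ne', ENNReal.rpow_one]
  · exact iSup_le fun i => ENNReal.rpow_le_rpow (le_iSup u i) ht.le

lemma ennreal_iSup_mul_iSup_of_monotone (u v : ℕ → ℝ≥0∞) (hu : Monotone u) (hv : Monotone v) :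
    (⨆ n, u n) * (⨆ n, v n) = ⨆ n, u n * v n := by
  apply le_antisymm
  · rw [ENNReal.iSup_mul]
    refine iSup_le fun i => ?_
    rw [ENNReal.mul_iSup]
    refine iSup_le fun j => ?_
    calc u i * v j ≤ u (max i j) * v (max i j) :=
          mul_le_mul' (hu (le_max_left _ _)) (hv (le_max_right _ _))
      _ ≤ ⨆ n, u n * v n := le_iSup (fun n => u n * v n) (max i j)
  · exact iSup_le fun n => mul_le_mul' (le_iSup u n) (le_iSup v n)

lemma ennreal_amgm {t : ℝ} (ht0 : 0 < t) (ht1 : t < 1) (a b : ℝ≥0∞) :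
    a ^ t * b ^ (1 - t) ≤ ENNReal.ofReal t * a + ENNReal.ofReal (1 - t) * b := by
  have h1t : 0 < 1 - t := by linarith
  rcases eq_or_ne a ∞ with rfl | ha
  · rcases eq_or_ne b 0 with rfl | hb
    · rw [ENNReal.zero_rpow_of_pos h1t, mul_zero]; exact zero_le
    · have : ENNReal.ofReal t * (⊤:ℝ≥0∞) = ⊤ :=
        ENNReal.mul_top (by simp only [ne_eq, ENNReal.ofReal_eq_zero, not_le]; linarith)
      rw [this, top_add]; exact le_top
  rcases eq_or_ne b ∞ with rfl | hb
  · rcases eq_or_ne a 0 with rfl | ha0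
    · rw [ENNReal.zero_rpow_of_pos ht0, zero_mul]; exact zero_le
    · have : ENNReal.ofReal (1 - t) * (⊤:ℝ≥0∞) = ⊤ :=
        ENNReal.mul_top (by simp only [ne_eq, ENNReal.ofReal_eq_zero, not_le]; linarith)
      rw [this, add_top]; exact le_top
  · have hx : (0:ℝ) ≤ a.toReal := ENNReal.toReal_nonneg
    have hy : (0:ℝ) ≤ b.toReal := ENNReal.toReal_nonneg
    have hab : a = ENNReal.ofReal a.toReal := (ENNReal.ofReal_toReal ha).symm
    have hbb : b = ENNReal.ofReal b.toReal := (ENNReal.ofReal_toReal hb).symm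
    rw [hab, hbb]
    rw [ENNReal.ofReal_rpow_of_nonneg hx ht0.le, ENNReal.ofReal_rpow_of_nonneg hy h1t.le,
      ← ENNReal.ofReal_mul (by positivity), ← ENNReal.ofReal_mul ht0.le,
      ← ENNReal.ofReal_mul h1t.le, ← ENNReal.ofReal_add (by positivity) (by positivity)]
    exact ENNReal.ofReal_le_ofReal
      (Real.geom_mean_le_arith_mean2_weighted ht0.le h1t.le hx hy (by ring))

lemma layercake_le_one {φ : ℝ → ℝ≥0∞} (hφ : Measurable φ) (h1 : ∀ x, φ x ≤ 1) :
    ∫⁻ x, φ x = ∫⁻ s in Ioi (0:ℝ), volume {x | ENNReal.ofReal s < φ x} := by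
  have hne : ∀ x, φ x ≠ ∞ := fun x => ((h1 x).trans_lt ENNReal.one_lt_top).ne
  calc ∫⁻ x, φ x = ∫⁻ x, ENNReal.ofReal ((φ x).toReal) := by
        congr 1; funext x; rw [ENNReal.ofReal_toReal (hne x)]
    _ = ∫⁻ s in Ioi (0:ℝ), volume {x | s < (φ x).toReal} :=
        lintegral_eq_lintegral_meas_lt volume (ae_of_all _ fun x => ENNReal.toReal_nonneg)
          hφ.ennreal_toReal.aemeasurable
    _ = _ := by
        refine setLIntegral_congr_fun measurableSet_Ioi (fun s hs => ?_)
        congr 1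
        ext x
        simp only [mem_setOf_eq]
        rw [ENNReal.ofReal_lt_iff_lt_toReal (le_of_lt hs) (hne x)]
lemma oneDim_core {t : ℝ} (ht0 : 0 < t) (ht1 : t < 1) {f g h : ℝ → ℝ≥0∞}
    (hf : Measurable f) (hg : Measurable g) (hh : Measurable h)
    (hfs : ⨆ x, f x = 1) (hgs : ⨆ x, g x = 1)
    (hle : ∀ x y, f x ^ t * g y ^ (1 - t) ≤ h (t * x + (1 - t) * y)) :
    ENNReal.ofReal t * (∫⁻ x, f x) + ENNReal.ofReal (1 - t) * (∫⁻ x, g x) ≤ ∫⁻ x, h x := by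
  have h1t : 0 < 1 - t := by linarith
  have hf1 : ∀ x, f x ≤ 1 := fun x => hfs ▸ le_iSup f x
  have hg1 : ∀ x, g x ≤ 1 := fun x => hgs ▸ le_iSup g x
  set h' : ℝ → ℝ≥0∞ := fun x => min (h x) 1 with hh'def
  have hh' : Measurable h' := hh.min measurable_const
  have hh'1 : ∀ x, h' x ≤ 1 := fun x => min_le_right _ _
  set Af : ℝ → Set ℝ := fun s => {x | ENNReal.ofReal s < f x} with hAf
  set Ag : ℝ → Set ℝ := fun s => {x | ENNReal.ofReal s < g x} with hAg
  set Ah : ℝ → Set ℝ := fun s => {x | ENNReal.ofReal s < h' x} with hAh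
  have hAfm : ∀ s, MeasurableSet (Af s) := fun s => hf measurableSet_Ioi
  have hAgm : ∀ s, MeasurableSet (Ag s) := fun s => hg measurableSet_Ioi
  -- measurability of the measure functions
  have hmf : Measurable fun s => volume (Af s) := by
    apply Antitone.measurable
    intro s s' hss'
    exact measure_mono fun x hx => lt_of_le_of_lt (ENNReal.ofReal_le_ofReal hss') hx
  have hmg : Measurable fun s => volume (Ag s) := by
    apply Antitone.measurable
    intro s s' hss'
    exact measure_mono fun x hx => lt_of_le_of_lt (ENNReal.ofReal_le_ofReal hss') hx
  -- key pointwise inequality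
  have key : ∀ s ∈ Ioo (0:ℝ) 1,
      ENNReal.ofReal t * volume (Af s) + ENNReal.ofReal (1 - t) * volume (Ag s)
        ≤ volume (Ah s) := by
    intro s hs
    have hs1 : ENNReal.ofReal s < 1 := by
      rw [← ENNReal.ofReal_one]; exact ENNReal.ofReal_lt_ofReal_iff_of_nonneg hs.1.le |>.mpr hs.2
    have hAf0 : (Af s).Nonempty := by
      have : ENNReal.ofReal s < ⨆ x, f x := hfs ▸ hs1
      obtain ⟨x, hx⟩ := lt_iSup_iff.mp this
      exact ⟨x, hx⟩
    have hAg0 : (Ag s).Nonempty := by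
      have : ENNReal.ofReal s < ⨆ x, g x := hgs ▸ hs1
      obtain ⟨y, hy⟩ := lt_iSup_iff.mp this
      exact ⟨y, hy⟩
    have hsub : t • (Af s) + (1 - t) • (Ag s) ⊆ Ah s := by
      rintro _ ⟨_, ⟨x, hx, rfl⟩, _, ⟨y, hy, rfl⟩, rfl⟩
      show ENNReal.ofReal s < min (h (t • x + (1 - t) • y)) 1
      refine lt_min ?_ hs1
      have hsplit : ENNReal.ofReal s =
          ENNReal.ofReal s ^ t * ENNReal.ofReal s ^ (1 - t) := by
        rw [← ENNReal.rpow_add t (1-t) (by simp [ENNReal.ofReal_eq_zero]; linarith [hs.1])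
          ENNReal.ofReal_ne_top]
        norm_num
      calc ENNReal.ofReal s = ENNReal.ofReal s ^ t * ENNReal.ofReal s ^ (1 - t) := hsplit
        _ < f x ^ t * g y ^ (1 - t) :=
            ENNReal.mul_lt_mul (ENNReal.rpow_lt_rpow hx ht0) (ENNReal.rpow_lt_rpow hy h1t)
        _ ≤ h (t * x + (1 - t) * y) := hle x y
        _ = h (t • x + (1 - t) • y) := by norm_num
    have hvf : volume (t • Af s) = ENNReal.ofReal t * volume (Af s) := by
      rw [Measure.addHaar_smul_of_nonneg volume ht0.le]
      norm_num
    have hvg : volume ((1 - t) • Ag s) = ENNReal.ofReal (1 - t) * volume (Ag s) := by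
      rw [Measure.addHaar_smul_of_nonneg volume h1t.le]
      norm_num
    calc ENNReal.ofReal t * volume (Af s) + ENNReal.ofReal (1 - t) * volume (Ag s)
        = volume (t • Af s) + volume ((1 - t) • Ag s) := by rw [hvf, hvg]
      _ ≤ volume (t • Af s + (1 - t) • Ag s) :=
          bm_oneDim ((hAfm s).const_smul₀ t) ((hAgm s).const_smul₀ (1 - t))
            (hAf0.smul_set) (hAg0.smul_set)
      _ ≤ volume (Ah s) := measure_mono hsub
  -- zero outside (0,1)
  have hzf : ∀ s : ℝ, 1 ≤ s → volume (Af s) = 0 := by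
    intro s hs
    convert measure_empty (μ := (volume : Measure ℝ))
    ext x
    simp only [hAf, mem_setOf_eq, mem_empty_iff_false, iff_false, not_lt]
    exact (hf1 x).trans (by rw [← ENNReal.ofReal_one]; exact ENNReal.ofReal_le_ofReal hs)
  have hzg : ∀ s : ℝ, 1 ≤ s → volume (Ag s) = 0 := by
    intro s hs
    convert measure_empty (μ := (volume : Measure ℝ))
    ext x
    simp only [hAg, mem_setOf_eq, mem_empty_iff_false, iff_false, not_lt]
    exact (hg1 x).trans (by rw [← ENNReal.ofReal_one]; exact ENNReal.ofReal_le_ofReal hs)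
  -- collapsing Ioi 0 to Ioo 0 1
  have hsplitIoi : ∀ (F : ℝ → ℝ≥0∞), (∀ s, 1 ≤ s → F s = 0) →
      ∫⁻ s in Ioi (0:ℝ), F s = ∫⁻ s in Ioo (0:ℝ) 1, F s := by
    intro F hF
    rw [← Ioo_union_Ici_eq_Ioi (zero_lt_one (α := ℝ)),
      lintegral_union measurableSet_Ici ((Iio_disjoint_Ici le_rfl).mono_left Ioo_subset_Iio_self)]
    have : ∫⁻ s in Ici (1:ℝ), F s = 0 := by
      rw [setLIntegral_congr_fun measurableSet_Ici (fun s hs => hF s hs)]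
      simp
    rw [this, add_zero]
  calc ENNReal.ofReal t * (∫⁻ x, f x) + ENNReal.ofReal (1 - t) * (∫⁻ x, g x)
      = ENNReal.ofReal t * (∫⁻ s in Ioo (0:ℝ) 1, volume (Af s))
        + ENNReal.ofReal (1 - t) * (∫⁻ s in Ioo (0:ℝ) 1, volume (Ag s)) := by
        rw [layercake_le_one hf hf1, layercake_le_one hg hg1, hsplitIoi _ hzf, hsplitIoi _ hzg]
    _ = ∫⁻ s in Ioo (0:ℝ) 1,
          (ENNReal.ofReal t * volume (Af s) + ENNReal.ofReal (1 - t) * volume (Ag s)) := by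
        rw [lintegral_add_left (hmf.const_mul _), lintegral_const_mul _ hmf,
          lintegral_const_mul _ hmg]
    _ ≤ ∫⁻ s in Ioo (0:ℝ) 1, volume (Ah s) := by
        refine setLIntegral_mono ?_ key
        apply Antitone.measurable
        intro s s' hss'
        exact measure_mono fun x hx => lt_of_le_of_lt (ENNReal.ofReal_le_ofReal hss') hx
    _ ≤ ∫⁻ s in Ioi (0:ℝ), volume (Ah s) :=
        lintegral_mono' (Measure.restrict_mono Ioo_subset_Ioi_self le_rfl) le_rfl
    _ = ∫⁻ x, h' x := (layercake_le_one hh' hh'1).symm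
    _ ≤ ∫⁻ x, h x := lintegral_mono fun x => min_le_left _ _
lemma oneDim_PL_bounded {t : ℝ} (ht0 : 0 < t) (ht1 : t < 1) {f g h : ℝ → ℝ≥0∞}
    (hf : Measurable f) (hg : Measurable g) (hh : Measurable h)
    (hfb : (⨆ x, f x) ≠ ∞) (hgb : (⨆ x, g x) ≠ ∞)
    (hle : ∀ x y, f x ^ t * g y ^ (1 - t) ≤ h (t * x + (1 - t) * y)) :
    (∫⁻ x, f x) ^ t * (∫⁻ x, g x) ^ (1 - t) ≤ ∫⁻ x, h x := by
  have h1t : 0 < 1 - t := by linarith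
  set M := ⨆ x, f x with hM
  set N := ⨆ x, g x with hN
  by_cases hM0 : M = 0
  · have hfz : ∀ x, f x = 0 := fun x => le_antisymm ((le_iSup f x).trans hM0.le) zero_le
    have : ∫⁻ x, f x = 0 := by simp [hfz]
    rw [this, ENNReal.zero_rpow_of_pos ht0, zero_mul]
    exact zero_le
  by_cases hN0 : N = 0
  · have hgz : ∀ x, g x = 0 := fun x => le_antisymm ((le_iSup g x).trans hN0.le) zero_le
    have : ∫⁻ x, g x = 0 := by simp [hgz]
    rw [this, ENNReal.zero_rpow_of_pos h1t, mul_zero]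
    exact zero_le
  have hMt0 : M ^ t ≠ 0 := (ENNReal.rpow_pos (pos_iff_ne_zero.mpr hM0) hfb).ne'
  have hNt0 : N ^ (1-t) ≠ 0 := (ENNReal.rpow_pos (pos_iff_ne_zero.mpr hN0) hgb).ne'
  have hMtt : M ^ t ≠ ∞ := ENNReal.rpow_ne_top_of_nonneg ht0.le hfb
  have hNtt : N ^ (1-t) ≠ ∞ := ENNReal.rpow_ne_top_of_nonneg h1t.le hgb
  set C := M ^ t * N ^ (1 - t) with hC
  have hC0 : C ≠ 0 := mul_ne_zero hMt0 hNt0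
  have hCt : C ≠ ∞ := ENNReal.mul_ne_top hMtt hNtt
  have hdivmul : ∀ (a b m n : ℝ≥0∞), m ≠ 0 → m ≠ ∞ → n ≠ 0 → n ≠ ∞ →
      a / m * (b / n) = a * b / (m * n) := by
    intro a b m n hm0 hmt hn0 hnt
    rw [div_eq_mul_inv, div_eq_mul_inv, div_eq_mul_inv, mul_mul_mul_comm,
      ← ENNReal.mul_inv (Or.inl hm0) (Or.inl hmt)]
  have hcore := oneDim_core ht0 ht1 (f := fun x => f x / M) (g := fun x => g x / N)
    (h := fun x => h x / C) (hf.div_const M) (hg.div_const N) (hh.div_const C)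
    ?_ ?_ ?_
  · have hif : ∫⁻ x, f x / M = (∫⁻ x, f x) / M := by
      simp_rw [div_eq_mul_inv]
      exact lintegral_mul_const _ hf
    have hig : ∫⁻ x, g x / N = (∫⁻ x, g x) / N := by
      simp_rw [div_eq_mul_inv]
      exact lintegral_mul_const _ hg
    have hih : ∫⁻ x, h x / C = (∫⁻ x, h x) / C := by
      simp_rw [div_eq_mul_inv]
      exact lintegral_mul_const _ hh
    rw [hif, hig, hih] at hcore
    have hfinal : (∫⁻ x, f x) ^ t * (∫⁻ x, g x) ^ (1 - t) / C ≤ (∫⁻ x, h x) / C := by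
      refine le_trans ?_ hcore
      rw [← hdivmul _ _ _ _ hMt0 hMtt hNt0 hNtt,
        ← ENNReal.div_rpow_of_nonneg _ _ ht0.le, ← ENNReal.div_rpow_of_nonneg _ _ h1t.le]
      exact ennreal_amgm ht0 ht1 _ _
    calc (∫⁻ x, f x) ^ t * (∫⁻ x, g x) ^ (1 - t)
        = (∫⁻ x, f x) ^ t * (∫⁻ x, g x) ^ (1 - t) / C * C := by
          rw [ENNReal.div_mul_cancel hC0 hCt]
      _ ≤ (∫⁻ x, h x) / C * C := mul_le_mul_left hfinal C
      _ ≤ ∫⁻ x, h x := by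
          rw [ENNReal.div_mul_cancel hC0 hCt]
  · simp_rw [div_eq_mul_inv]
    rw [← ENNReal.iSup_mul, ← hM, ENNReal.mul_inv_cancel hM0 hfb]
  · simp_rw [div_eq_mul_inv]
    rw [← ENNReal.iSup_mul, ← hN, ENNReal.mul_inv_cancel hN0 hgb]
  · intro x y
    rw [ENNReal.div_rpow_of_nonneg _ _ ht0.le, ENNReal.div_rpow_of_nonneg _ _ h1t.le,
      hdivmul _ _ _ _ hMt0 hMtt hNt0 hNtt]
    exact ENNReal.div_le_div_right (hle x y) C

lemma iSup_min_nat (a : ℝ≥0∞) : ⨆ n : ℕ, min a n = a := by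
  apply le_antisymm (iSup_le fun n => min_le_left _ _)
  rcases eq_or_ne a ∞ with rfl | ha
  · have : ∀ n : ℕ, min (⊤:ℝ≥0∞) n = n := fun n => min_eq_right le_top
    simp_rw [this]
    rw [← ENNReal.iSup_natCast]
  · obtain ⟨n, hn⟩ := ENNReal.exists_nat_gt ha
    exact le_trans (le_of_eq (min_eq_left hn.le).symm) (le_iSup (fun n : ℕ => min a n) n)

lemma oneDim_PL {t : ℝ} (ht0 : 0 < t) (ht1 : t < 1) {f g h : ℝ → ℝ≥0∞}
    (hf : Measurable f) (hg : Measurable g) (hh : Measurable h)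
    (hle : ∀ x y, f x ^ t * g y ^ (1 - t) ≤ h (t * x + (1 - t) * y)) :
    (∫⁻ x, f x) ^ t * (∫⁻ x, g x) ^ (1 - t) ≤ ∫⁻ x, h x := by
  have h1t : 0 < 1 - t := by linarith
  have htrunc : ∀ n : ℕ,
      (∫⁻ x, min (f x) n) ^ t * (∫⁻ x, min (g x) n) ^ (1 - t) ≤ ∫⁻ x, h x := by
    intro n
    refine oneDim_PL_bounded ht0 ht1 (hf.min measurable_const) (hg.min measurable_const) hh
      ?_ ?_ ?_
    · exact ((iSup_le fun x => min_le_right _ _).trans_lt (ENNReal.natCast_lt_top n)).ne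
    · exact ((iSup_le fun x => min_le_right _ _).trans_lt (ENNReal.natCast_lt_top n)).ne
    · intro x y
      refine le_trans (mul_le_mul' ?_ ?_) (hle x y)
      · exact ENNReal.rpow_le_rpow (min_le_left _ _) ht0.le
      · exact ENNReal.rpow_le_rpow (min_le_left _ _) h1t.le
  have hlim : ∀ (φ : ℝ → ℝ≥0∞), Measurable φ →
      (⨆ n : ℕ, ∫⁻ x, min (φ x) n) = ∫⁻ x, φ x := by
    intro φ hφ
    rw [← lintegral_iSup (fun n => hφ.min measurable_const)
      (fun n m hnm => fun x => min_le_min le_rfl (Nat.cast_le.mpr hnm))]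
    congr 1
    funext x
    exact iSup_min_nat (φ x)
  have hmonof : Monotone fun n : ℕ => ∫⁻ x, min (f x) n := fun n m hnm =>
    lintegral_mono fun x => min_le_min le_rfl (Nat.cast_le.mpr hnm)
  have hmonog : Monotone fun n : ℕ => ∫⁻ x, min (g x) n := fun n m hnm =>
    lintegral_mono fun x => min_le_min le_rfl (Nat.cast_le.mpr hnm)
  calc (∫⁻ x, f x) ^ t * (∫⁻ x, g x) ^ (1 - t)
      = (⨆ n : ℕ, ∫⁻ x, min (f x) n) ^ t * (⨆ n : ℕ, ∫⁻ x, min (g x) n) ^ (1 - t) := by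
        rw [hlim f hf, hlim g hg]
    _ = (⨆ n : ℕ, (∫⁻ x, min (f x) n) ^ t) * ⨆ n : ℕ, (∫⁻ x, min (g x) n) ^ (1 - t) := by
        rw [ennreal_rpow_iSup _ ht0, ennreal_rpow_iSup _ h1t]
    _ = ⨆ n : ℕ, (∫⁻ x, min (f x) n) ^ t * (∫⁻ x, min (g x) n) ^ (1 - t) := by
        exact ennreal_iSup_mul_iSup_of_monotone _ _
          (fun n m hnm => ENNReal.rpow_le_rpow (hmonof hnm) ht0.le)
          (fun n m hnm => ENNReal.rpow_le_rpow (hmonog hnm) h1t.le)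
    _ ≤ ∫⁻ x, h x := iSup_le htrunc
lemma PL_dim : ∀ (n : ℕ) {t : ℝ}, 0 < t → t < 1 → ∀ {f g h : (Fin n → ℝ) → ℝ≥0∞},
    Measurable f → Measurable g → Measurable h →
    (∀ x y, f x ^ t * g y ^ (1 - t) ≤ h (t • x + (1 - t) • y)) →
    (∫⁻ x, f x) ^ t * (∫⁻ x, g x) ^ (1 - t) ≤ ∫⁻ x, h x := by
  intro n
  induction n with
  | zero =>
    intro t ht0 ht1 f g h hf hg hh hle
    have huniq : ∀ φ : (Fin 0 → ℝ) → ℝ≥0∞, ∫⁻ x, φ x = φ default := by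
      intro φ
      rw [lintegral_unique]
      have : (volume : Measure (Fin 0 → ℝ)) univ = 1 := by
        rw [MeasureTheory.volume_pi, Measure.pi_univ]
        simp
      rw [this, mul_one]
      exact congrArg φ (Subsingleton.elim _ _)
    rw [huniq f, huniq g, huniq h]
    have := hle default default
    rwa [Subsingleton.elim (t • (default : Fin 0 → ℝ) + (1 - t) • default) default] at this
  | succ n ih =>
    intro t ht0 ht1 f g h hf hg hh hle
    set e := MeasurableEquiv.piFinSuccAbove (fun _ : Fin (n+1) => ℝ) 0 with he
    have hmp : MeasurePreserving e volume volume :=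
      volume_preserving_piFinSuccAbove (fun _ : Fin (n+1) => ℝ) 0
    set F := fun z : ℝ × (Fin n → ℝ) => f (e.symm z) with hF
    set G := fun z : ℝ × (Fin n → ℝ) => g (e.symm z) with hG
    set H := fun z : ℝ × (Fin n → ℝ) => h (e.symm z) with hH
    have hFm : Measurable F := hf.comp e.symm.measurable
    have hGm : Measurable G := hg.comp e.symm.measurable
    have hHm : Measurable H := hh.comp e.symm.measurable
    have hlin : ∀ (a b : ℝ) (x y : Fin n → ℝ),
        t • (e.symm (a, x)) + (1 - t) • (e.symm (b, y)) =
          e.symm (t * a + (1 - t) * b, t • x + (1 - t) • y) := by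
      intro a b x y
      funext j
      simp only [he, MeasurableEquiv.piFinSuccAbove_symm_apply, Pi.add_apply, Pi.smul_apply,
        smul_eq_mul]
      refine Fin.succAboveCases 0 ?_ ?_ j
      · simp
      · intro i
        simp
    set F1 : ℝ → ℝ≥0∞ := fun a => ∫⁻ x, F (a, x) with hF1
    set G1 : ℝ → ℝ≥0∞ := fun a => ∫⁻ x, G (a, x) with hG1
    set H1 : ℝ → ℝ≥0∞ := fun a => ∫⁻ x, H (a, x) with hH1
    have h1d : ∀ a b : ℝ, F1 a ^ t * G1 b ^ (1 - t) ≤ H1 (t * a + (1 - t) * b) := by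
      intro a b
      refine ih ht0 ht1 (hFm.comp measurable_prodMk_left)
        (hGm.comp measurable_prodMk_left) (hHm.comp measurable_prodMk_left) ?_
      intro x y
      have := hle (e.symm (a, x)) (e.symm (b, y))
      rwa [hlin] at this
    have hmeasF1 : Measurable F1 := hFm.lintegral_prod_right'
    have hmeasG1 : Measurable G1 := hGm.lintegral_prod_right'
    have hmeasH1 : Measurable H1 := hHm.lintegral_prod_right'
    have hPL := oneDim_PL ht0 ht1 hmeasF1 hmeasG1 hmeasH1 h1d
    have hconv : ∀ (φ : (Fin (n+1) → ℝ) → ℝ≥0∞), Measurable φ →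
        ∫⁻ z, φ z = ∫⁻ a, ∫⁻ x, φ (e.symm (a, x)) := by
      intro φ hφ
      set Φ : ℝ × (Fin n → ℝ) → ℝ≥0∞ := fun w => φ (e.symm w) with hΦ
      have hΦm : Measurable Φ := hφ.comp e.symm.measurable
      have h1 : ∫⁻ z, φ z = ∫⁻ z, Φ (e z) := by
        congr 1
        funext z
        rw [hΦ]
        simp only []
        rw [e.symm_apply_apply]
      rw [h1, hmp.lintegral_comp hΦm, MeasureTheory.Measure.volume_eq_prod,
        lintegral_prod _ hΦm.aemeasurable]
    rw [hconv f hf, hconv g hg, hconv h hh]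
    exact hPL

/-- Prékopa's theorem: marginal integration of a jointly log-concave function
over a convex set preserves log-concavity. -/
theorem logConcave_marginal_integral
    {p q : ℕ} (ψ : (Fin p → ℝ) → (Fin q → ℝ) → ℝ)
    (hψ_nonneg : ∀ x U, 0 ≤ ψ x U)
    (hψ_meas : Measurable (fun z : (Fin p → ℝ) × (Fin q → ℝ) => ψ z.1 z.2))
    (hψ_logconcave : ∀ x₁ x₂ : Fin p → ℝ, ∀ U₁ U₂ : Fin q → ℝ,
      ∀ t : ℝ, 0 ≤ t → t ≤ 1 →
        ψ x₁ U₁ ^ t * ψ x₂ U₂ ^ (1 - t) ≤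
          ψ (t • x₁ + (1 - t) • x₂) (t • U₁ + (1 - t) • U₂))
    (K : Set (Fin p → ℝ)) (hK_conv : Convex ℝ K) (hK_meas : MeasurableSet K)
    (hint : ∀ U, IntegrableOn (fun x => ψ x U) K volume) :
    ∀ U₁ U₂ : Fin q → ℝ, ∀ t : ℝ, 0 ≤ t → t ≤ 1 →
      (∫ x in K, ψ x U₁) ^ t * (∫ x in K, ψ x U₂) ^ (1 - t) ≤
        ∫ x in K, ψ x (t • U₁ + (1 - t) • U₂) := by
  intro U₁ U₂ t ht0 ht1
  rcases eq_or_lt_of_le ht0 with rfl | ht0'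
  · simp [Real.rpow_zero, Real.rpow_one]
  rcases eq_or_lt_of_le ht1 with rfl | ht1'
  · simp [Real.rpow_zero, Real.rpow_one]
  have h1t : 0 < 1 - t := by linarith
  set U₃ := t • U₁ + (1 - t) • U₂ with hU₃
  have hm : ∀ U : Fin q → ℝ, Measurable fun x => ψ x U := fun U =>
    hψ_meas.comp (measurable_id.prodMk measurable_const)
  set F := K.indicator fun x => ENNReal.ofReal (ψ x U₁) with hFdef
  set G := K.indicator fun x => ENNReal.ofReal (ψ x U₂) with hGdef
  set H := K.indicator fun x => ENNReal.ofReal (ψ x U₃) with hHdef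
  have hFm : Measurable F := (ENNReal.measurable_ofReal.comp (hm U₁)).indicator hK_meas
  have hGm : Measurable G := (ENNReal.measurable_ofReal.comp (hm U₂)).indicator hK_meas
  have hHm : Measurable H := (ENNReal.measurable_ofReal.comp (hm U₃)).indicator hK_meas
  have hhyp : ∀ x y, F x ^ t * G y ^ (1 - t) ≤ H (t • x + (1 - t) • y) := by
    intro x y
    by_cases hx : x ∈ K
    · by_cases hy : y ∈ K
      · have hz : t • x + (1 - t) • y ∈ K := hK_conv hx hy ht0'.le h1t.le (by ring)
        rw [hFdef, hGdef, hHdef, indicator_of_mem hx, indicator_of_mem hy, indicator_of_mem hz,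
          ENNReal.ofReal_rpow_of_nonneg (hψ_nonneg x U₁) ht0'.le,
          ENNReal.ofReal_rpow_of_nonneg (hψ_nonneg y U₂) h1t.le,
          ← ENNReal.ofReal_mul (Real.rpow_nonneg (hψ_nonneg x U₁) t)]
        exact ENNReal.ofReal_le_ofReal (hψ_logconcave x y U₁ U₂ t ht0'.le ht1)
      · rw [hGdef, indicator_of_notMem hy, ENNReal.zero_rpow_of_pos h1t, mul_zero]
        exact zero_le
    · rw [hFdef, indicator_of_notMem hx, ENNReal.zero_rpow_of_pos ht0', zero_mul]
      exact zero_le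
  have hPL := PL_dim p ht0' ht1' hFm hGm hHm hhyp
  have hi : ∀ U : Fin q → ℝ, ∫⁻ x, (K.indicator fun x => ENNReal.ofReal (ψ x U)) x
      = ENNReal.ofReal (∫ x in K, ψ x U) := by
    intro U
    rw [lintegral_indicator hK_meas _,
      ← ofReal_integral_eq_lintegral_ofReal (hint U) (ae_of_all _ fun x => hψ_nonneg x U)]
  rw [hFdef] at hPL
  rw [hGdef] at hPL
  rw [hHdef] at hPL
  rw [hi U₁, hi U₂, hi U₃] at hPL
  have hnn : ∀ U : Fin q → ℝ, 0 ≤ ∫ x in K, ψ x U := fun U =>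
    integral_nonneg fun x => hψ_nonneg x U
  rw [ENNReal.ofReal_rpow_of_nonneg (hnn U₁) ht0'.le,
    ENNReal.ofReal_rpow_of_nonneg (hnn U₂) h1t.le,
    ← ENNReal.ofReal_mul (Real.rpow_nonneg (hnn U₁) t)] at hPL
  exact (ENNReal.ofReal_le_ofReal_iff (hnn U₃)).mp hPL
end
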